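/- Comparison principle for nonlinear integral inequalities: let X be a compact interval, k : X×X → ℝ continuous positive, and g : ℝ → ℝ a C¹ function that is concave, increasing, with g(0) = 0 and g ≤ 1. Let U₁ be nonnegative, bounded, lower semicontinuous and U₂ nonnegative, bounded, upper semicontinuous, satisfying U₂(x) − ∫_X k(x,y) g(U₂(y)) dy ≤ U₁(x) − ∫_X k(x,y) g(U₁(y)) dy for all x. Assume there exist λ > 0 and continuous φ > 0 with φ(x) − ∫_X k(x,y) g'(U₁(y)) φ(y) dy = λ φ(x) for all x. Then U₂ ≤ U₁ on X. -/

import Mathlib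

open MeasureTheory Real Set

/-- Tangent line lies above a concave differentiable function. -/
lemma concave_tangent_le {g : ℝ → ℝ} (hgconc : ConcaveOn ℝ Set.univ g)
    (hd : Differentiable ℝ g) (a b : ℝ) : g b - g a ≤ deriv g a * (b - a) := by
  rcases lt_trichotomy a b with h | h | h
  · have hs := hgconc.slope_le_deriv (Set.mem_univ a) (Set.mem_univ b) h (hd a)
    rw [slope_def_field, div_le_iff₀ (by linarith)] at hs
    linarith [hs]
  · simp [h]
  · have hs := hgconc.deriv_le_slope (Set.mem_univ b) (Set.mem_univ a) h (hd a)
    rw [slope_def_field, le_div_iff₀ (by linarith)] at hs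
    nlinarith [hs]

lemma deriv_nonneg_of_monotone {g : ℝ → ℝ} (hgconc : ConcaveOn ℝ Set.univ g)
    (hd : Differentiable ℝ g) (hgmono : Monotone g) (t : ℝ) : 0 ≤ deriv g t := by
  have hs := hgconc.slope_le_deriv (Set.mem_univ t) (Set.mem_univ (t + 1))
    (by linarith) (hd t)
  rw [slope_def_field] at hs
  have h1 : g t ≤ g (t + 1) := hgmono (by linarith)
  have : (t + 1 : ℝ) - t = 1 := by ring
  rw [this, div_one] at hs
  linarith

/-- Comparison principle for nonlinear integral inequalities. -/
theorem stmt6 (A : ℝ) (hA : 0 < A) (k : ℝ → ℝ → ℝ) (g U₁ U₂ φ : ℝ → ℝ) (lam : ℝ)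
    (hkc : ContinuousOn (fun q : ℝ × ℝ => k q.1 q.2) (Set.Icc 0 A ×ˢ Set.Icc 0 A))
    (hkpos : ∀ x ∈ Set.Icc (0:ℝ) A, ∀ y ∈ Set.Icc (0:ℝ) A, 0 < k x y)
    (hg : ContDiff ℝ 1 g) (hgconc : ConcaveOn ℝ Set.univ g)
    (hgmono : Monotone g) (hg0 : g 0 = 0) (hg1 : ∀ x, g x ≤ 1)
    (hU₁nn : ∀ x, 0 ≤ U₁ x) (hU₁b : ∃ C, ∀ x, U₁ x ≤ C)
    (hU₂nn : ∀ x, 0 ≤ U₂ x) (hU₂b : ∃ C, ∀ x, U₂ x ≤ C)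
    (hU₁m : Measurable U₁) (hU₂m : Measurable U₂)
    (hU₁lsc : LowerSemicontinuousOn U₁ (Set.Icc 0 A))
    (hU₂usc : UpperSemicontinuousOn U₂ (Set.Icc 0 A))
    (hcomp : ∀ x ∈ Set.Icc (0:ℝ) A,
      U₂ x - (∫ y in Set.Icc (0:ℝ) A, k x y * g (U₂ y)) ≤
      U₁ x - (∫ y in Set.Icc (0:ℝ) A, k x y * g (U₁ y)))
    (hlam : 0 < lam)
    (hφc : ContinuousOn φ (Set.Icc 0 A)) (hφpos : ∀ x ∈ Set.Icc (0:ℝ) A, 0 < φ x)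
    (heig : ∀ x ∈ Set.Icc (0:ℝ) A,
      φ x - (∫ y in Set.Icc (0:ℝ) A, k x y * deriv g (U₁ y) * φ y) = lam * φ x) :
    ∀ x ∈ Set.Icc (0:ℝ) A, U₂ x ≤ U₁ x := by
  classical
  set I : Set ℝ := Set.Icc (0:ℝ) A with hI
  have hIm : MeasurableSet I := measurableSet_Icc
  have hIc : IsCompact I := isCompact_Icc
  have hIne : I.Nonempty := ⟨0, by constructor <;> simp [le_of_lt hA]⟩
  have hgdiff : Differentiable ℝ g := hg.differentiable one_ne_zero
  have hgdc : Continuous (deriv g) := hg.continuous_deriv le_rfl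
  have hg'nn : ∀ t, 0 ≤ deriv g t := deriv_nonneg_of_monotone hgconc hgdiff hgmono
  -- bounds
  obtain ⟨C₁, hC₁⟩ := hU₁b
  obtain ⟨C₂, hC₂⟩ := hU₂b
  have hC₁0 : 0 ≤ C₁ := le_trans (hU₁nn 0) (hC₁ 0)
  have hC₂0 : 0 ≤ C₂ := le_trans (hU₂nn 0) (hC₂ 0)
  obtain ⟨K, hK⟩ := (hIc.prod hIc).exists_bound_of_continuousOn hkc
  have hKb : ∀ x ∈ I, ∀ y ∈ I, |k x y| ≤ K := by
    intro x hx y hy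
    have := hK (x, y) (Set.mk_mem_prod hx hy)
    simpa using this
  obtain ⟨D, hD⟩ := (isCompact_Icc : IsCompact (Set.Icc (0:ℝ) C₁)).exists_bound_of_continuousOn
    hgdc.continuousOn
  have hDb : ∀ y : ℝ, |deriv g (U₁ y)| ≤ D := by
    intro y
    simpa using hD (U₁ y) ⟨hU₁nn y, hC₁ y⟩
  obtain ⟨Φ, hΦ⟩ := hIc.exists_bound_of_continuousOn hφc
  have hΦb : ∀ y ∈ I, |φ y| ≤ Φ := by intro y hy; simpa using hΦ y hy
  -- integrability helper
  have hint : ∀ (f : ℝ → ℝ), AEStronglyMeasurable f (volume.restrict I) →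
      ∀ (C : ℝ), (∀ y ∈ I, |f y| ≤ C) → IntegrableOn f I := by
    intro f hm C hb
    refine Integrable.mono' (g := fun _ => C) ?_ hm ?_
    · exact integrableOn_const measure_Icc_lt_top.ne
    · exact (ae_restrict_iff' hIm).2 (ae_of_all _ fun y hy => by
        simpa [Real.norm_eq_abs] using hb y hy)
  -- measurability pieces
  have hkxm : ∀ x ∈ I, AEStronglyMeasurable (fun y => k x y) (volume.restrict I) := by
    intro x hx
    refine ContinuousOn.aestronglyMeasurable ?_ hIm
    have : ContinuousOn (fun y : ℝ => ((x, y) : ℝ × ℝ)) I :=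
      (continuous_const.prodMk continuous_id).continuousOn
    exact hkc.comp this (fun y hy => Set.mk_mem_prod hx hy)
  have hgU₁m : AEStronglyMeasurable (fun y => g (U₁ y)) (volume.restrict I) :=
    (hg.continuous.measurable.comp hU₁m).aestronglyMeasurable
  have hgU₂m : AEStronglyMeasurable (fun y => g (U₂ y)) (volume.restrict I) :=
    (hg.continuous.measurable.comp hU₂m).aestronglyMeasurable
  have hg'U₁m : AEStronglyMeasurable (fun y => deriv g (U₁ y)) (volume.restrict I) :=
    (hgdc.measurable.comp hU₁m).aestronglyMeasurable
  have hφm : AEStronglyMeasurable φ (volume.restrict I) :=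
    hφc.aestronglyMeasurable hIm
  have hzm : AEStronglyMeasurable (fun y => U₁ y - U₂ y) (volume.restrict I) :=
    ((hU₁m.sub hU₂m).aestronglyMeasurable)
  -- integrable functions for fixed x ∈ I
  have hgU₁bd : ∀ y, |g (U₁ y)| ≤ 1 := by
    intro y
    rw [abs_le]
    constructor
    · have : g 0 ≤ g (U₁ y) := hgmono (hU₁nn y); linarith [hg0 ▸ this]
    · exact hg1 _
  have hgU₂bd : ∀ y, |g (U₂ y)| ≤ 1 := by
    intro y
    rw [abs_le]
    constructor
    · have : g 0 ≤ g (U₂ y) := hgmono (hU₂nn y); linarith [hg0 ▸ this]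
    · exact hg1 _
  have hI1 : ∀ x ∈ I, IntegrableOn (fun y => k x y * g (U₁ y)) I := by
    intro x hx
    refine hint _ ((hkxm x hx).mul hgU₁m) (K * 1) fun y hy => ?_
    rw [abs_mul]
    exact mul_le_mul (hKb x hx y hy) (hgU₁bd y) (abs_nonneg _)
      (le_trans (abs_nonneg _) (hKb x hx y hy))
  have hI2 : ∀ x ∈ I, IntegrableOn (fun y => k x y * g (U₂ y)) I := by
    intro x hx
    refine hint _ ((hkxm x hx).mul hgU₂m) (K * 1) fun y hy => ?_
    rw [abs_mul]
    exact mul_le_mul (hKb x hx y hy) (hgU₂bd y) (abs_nonneg _)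
      (le_trans (abs_nonneg _) (hKb x hx y hy))
  have h0I : (0:ℝ) ∈ I := ⟨le_refl 0, le_of_lt hA⟩
  have hKnn : 0 ≤ K := le_trans (abs_nonneg _) (hKb 0 h0I 0 h0I)
  have hDnn : 0 ≤ D := le_trans (abs_nonneg _) (hDb 0)
  have hI3 : ∀ x ∈ I, IntegrableOn (fun y => k x y * deriv g (U₁ y) * φ y) I := by
    intro x hx
    refine hint _ (((hkxm x hx).mul hg'U₁m).mul hφm) (K * D * Φ) fun y hy => ?_
    rw [abs_mul, abs_mul]
    have h1 : |k x y| * |deriv g (U₁ y)| ≤ K * D :=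
      mul_le_mul (hKb x hx y hy) (hDb y) (abs_nonneg _) hKnn
    exact mul_le_mul h1 (hΦb y hy) (abs_nonneg _) (by positivity)
  have hzbd : ∀ y, |U₁ y - U₂ y| ≤ C₁ + C₂ := by
    intro y
    rw [abs_le]
    constructor
    · linarith [hU₁nn y, hC₂ y]
    · linarith [hU₂nn y, hC₁ y]
  have hI4 : ∀ x ∈ I, IntegrableOn (fun y => k x y * deriv g (U₁ y) * (U₁ y - U₂ y)) I := by
    intro x hx
    refine hint _ (((hkxm x hx).mul hg'U₁m).mul hzm) (K * D * (C₁ + C₂)) fun y hy => ?_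
    rw [abs_mul, abs_mul]
    have h1 : |k x y| * |deriv g (U₁ y)| ≤ K * D :=
      mul_le_mul (hKb x hx y hy) (hDb y) (abs_nonneg _) hKnn
    exact mul_le_mul h1 (hzbd y) (abs_nonneg _) (by positivity)
  -- Step A
  have keyA : ∀ x ∈ I, (∫ y in I, k x y * deriv g (U₁ y) * (U₁ y - U₂ y)) ≤ U₁ x - U₂ x := by
    intro x hx
    have h1 : (∫ y in I, k x y * g (U₁ y)) - (∫ y in I, k x y * g (U₂ y)) ≤ U₁ x - U₂ x := by
      have := hcomp x hx
      linarith
    have h2 : (∫ y in I, k x y * g (U₁ y)) - (∫ y in I, k x y * g (U₂ y)) =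
        ∫ y in I, (k x y * g (U₁ y) - k x y * g (U₂ y)) :=
      (integral_sub (hI1 x hx) (hI2 x hx)).symm
    have h3 : (∫ y in I, k x y * deriv g (U₁ y) * (U₁ y - U₂ y)) ≤
        ∫ y in I, (k x y * g (U₁ y) - k x y * g (U₂ y)) := by
      refine setIntegral_mono_on (hI4 x hx) ((hI1 x hx).sub (hI2 x hx)) hIm ?_
      intro y hy
      have hk : 0 ≤ k x y := le_of_lt (hkpos x hx y hy)
      have htan : g (U₂ y) - g (U₁ y) ≤ deriv g (U₁ y) * (U₂ y - U₁ y) :=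
        concave_tangent_le hgconc hgdiff (U₁ y) (U₂ y)
      have : deriv g (U₁ y) * (U₁ y - U₂ y) ≤ g (U₁ y) - g (U₂ y) := by nlinarith
      nlinarith
    linarith [h2 ▸ h3]
  -- φ has a positive lower bound
  obtain ⟨x₀, hx₀, hmin⟩ := hIc.exists_isMinOn hIne hφc
  set δ := φ x₀ with hδ
  have hδpos : 0 < δ := hφpos x₀ hx₀
  have hδle : ∀ x ∈ I, δ ≤ φ x := fun x hx => hmin hx
  -- the set S
  set S : Set ℝ := {t : ℝ | 0 ≤ t ∧ ∀ x ∈ I, 0 ≤ U₁ x - U₂ x + t * φ x} with hS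
  have hSne : (C₂ / δ) ∈ S := by
    constructor
    · positivity
    · intro x hx
      have h1 : C₂ / δ * δ ≤ C₂ / δ * φ x :=
        mul_le_mul_of_nonneg_left (hδle x hx) (by positivity)
      have h2 : C₂ / δ * δ = C₂ := div_mul_cancel₀ _ (ne_of_gt hδpos)
      have := hU₁nn x
      have := hC₂ x
      nlinarith
  have hSbdd : BddBelow S := ⟨0, fun t ht => ht.1⟩
  set t₀ := sInf S with ht₀
  have ht₀0 : 0 ≤ t₀ := le_csInf ⟨_, hSne⟩ fun t ht => ht.1
  -- z + t₀ φ ≥ 0 on I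
  have h0 : ∀ x ∈ I, 0 ≤ U₁ x - U₂ x + t₀ * φ x := by
    intro x hx
    by_contra hcon
    push_neg at hcon
    have hφx : 0 < φ x := hφpos x hx
    set ε := -(U₁ x - U₂ x + t₀ * φ x) / (2 * φ x) with hε
    have hεpos : 0 < ε := by
      apply div_pos (by linarith) (by linarith)
    obtain ⟨t, htS, htlt⟩ := exists_lt_of_csInf_lt ⟨_, hSne⟩ (show t₀ < t₀ + ε by linarith)
    have h1 : 0 ≤ U₁ x - U₂ x + t * φ x := htS.2 x hx
    have h2 : t₀ ≤ t := csInf_le hSbdd htS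
    have h3 : t * φ x ≤ (t₀ + ε) * φ x :=
      mul_le_mul_of_nonneg_right (le_of_lt htlt) (le_of_lt hφx)
    have h4 : 0 ≤ U₁ x - U₂ x + (t₀ + ε) * φ x := by linarith
    rw [hε] at h4
    have : ε * φ x = -(U₁ x - U₂ x + t₀ * φ x) / 2 := by
      rw [hε, div_mul_eq_mul_div, mul_div_mul_right _ _ hφx.ne']
    nlinarith [this]
  -- Step C
  have keyC : ∀ x ∈ I, 0 ≤ U₁ x - U₂ x + (t₀ * (1 - lam)) * φ x := by
    intro x hx
    -- ∫ k g' φ = (1 - lam) φ x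
    have heq : (∫ y in I, k x y * deriv g (U₁ y) * φ y) = (1 - lam) * φ x := by
      have := heig x hx
      linarith
    -- nonnegativity of ∫ k g' (z + t₀ φ)
    have hnn : 0 ≤ ∫ y in I, k x y * deriv g (U₁ y) * (U₁ y - U₂ y + t₀ * φ y) := by
      refine setIntegral_nonneg hIm fun y hy => ?_
      have hk : 0 ≤ k x y := le_of_lt (hkpos x hx y hy)
      have := h0 y hy
      have := hg'nn (U₁ y)
      positivity
    -- split the integral
    have hsplit : (∫ y in I, k x y * deriv g (U₁ y) * (U₁ y - U₂ y + t₀ * φ y)) =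
        (∫ y in I, k x y * deriv g (U₁ y) * (U₁ y - U₂ y)) +
        t₀ * (∫ y in I, k x y * deriv g (U₁ y) * φ y) := by
      have e1 : ∀ y : ℝ, k x y * deriv g (U₁ y) * (U₁ y - U₂ y + t₀ * φ y) =
          k x y * deriv g (U₁ y) * (U₁ y - U₂ y) + t₀ * (k x y * deriv g (U₁ y) * φ y) := by
        intro y; ring
      rw [show (fun y => k x y * deriv g (U₁ y) * (U₁ y - U₂ y + t₀ * φ y)) =
          (fun y => k x y * deriv g (U₁ y) * (U₁ y - U₂ y) +
            t₀ * (k x y * deriv g (U₁ y) * φ y)) from funext e1]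
      rw [integral_add (hI4 x hx) ((hI3 x hx).const_mul t₀), integral_const_mul]
    have hA' := keyA x hx
    -- combine
    have : 0 ≤ (∫ y in I, k x y * deriv g (U₁ y) * (U₁ y - U₂ y)) +
        t₀ * ((1 - lam) * φ x) := by
      rw [← heq, ← hsplit]; exact hnn
    linarith
  -- Step D: conclude t₀ = 0
  have ht₁S : max (t₀ * (1 - lam)) 0 ∈ S := by
    constructor
    · exact le_max_right _ _
    · intro x hx
      have h1 := keyC x hx
      have h2 : t₀ * (1 - lam) * φ x ≤ max (t₀ * (1 - lam)) 0 * φ x :=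
        mul_le_mul_of_nonneg_right (le_max_left _ _) (le_of_lt (hφpos x hx))
      linarith
  have ht₀le : t₀ ≤ max (t₀ * (1 - lam)) 0 := csInf_le hSbdd ht₁S
  have ht₀eq : t₀ = 0 := by
    rcases le_or_gt (t₀ * (1 - lam)) 0 with h | h
    · have : max (t₀ * (1 - lam)) 0 = 0 := max_eq_right h
      linarith [this ▸ ht₀le]
    · have : max (t₀ * (1 - lam)) 0 = t₀ * (1 - lam) := max_eq_left (le_of_lt h)
      rw [this] at ht₀le
      nlinarith
  intro x hx
  have := h0 x hx
  rw [ht₀eq] at this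
  linarith
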